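/- Let ν ≥ 0 be a real number. Then v(J_ν)(x) ≥ 0 for all x > 0. -/

import Mathlib

/-- v h = (deriv h)^2 - (second derivative of h) * h. -/
noncomputable def v (f : ℝ → ℝ) (x : ℝ) : ℝ := (deriv f x) ^ 2 - deriv^[2] f x * f x

/-- Bessel function of the first kind (for `x > 0`). -/
noncomputable def besselJ (ν : ℝ) (x : ℝ) : ℝ :=
  ∑' k : ℕ, (-1 : ℝ) ^ k / ((Nat.factorial k : ℝ) * Real.Gamma ((k : ℝ) + ν + 1)) *
    (x / 2) ^ (2 * (k : ℝ) + ν)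


open Set Filter

lemma psum_bound_aux {c : ℕ → ℝ} {C : ℝ} (hc : ∀ k, |c k| ≤ C / k.factorial)
    {y R : ℝ} (hyR : |y| ≤ R) (hR1 : 1 ≤ R) (k : ℕ) :
    ‖c k * ((k : ℝ) * y ^ (k - 1))‖ ≤ C * ((2 * R) ^ k / k.factorial) := by
  have hC : 0 ≤ C := le_trans (abs_nonneg _) (by simpa using hc 0)
  have hR0 : (0:ℝ) ≤ R := le_trans zero_le_one hR1
  rw [Real.norm_eq_abs, abs_mul, abs_mul]
  have h1 : |(k : ℝ)| = (k : ℝ) := abs_of_nonneg (Nat.cast_nonneg k)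
  rw [h1, abs_pow]
  calc |c k| * ((k : ℝ) * |y| ^ (k - 1))
      ≤ (C / k.factorial) * ((2 : ℝ) ^ k * R ^ k) := by
        apply mul_le_mul (hc k) ?_ (by positivity) (by positivity)
        apply mul_le_mul ?_ ?_ (by positivity) (by positivity)
        · exact_mod_cast (Nat.lt_two_pow_self).le
        · calc |y| ^ (k - 1) ≤ R ^ (k - 1) := by gcongr
            _ ≤ R ^ k := pow_le_pow_right₀ hR1 (Nat.sub_le k 1)
    _ = C * ((2 * R) ^ k / k.factorial) := by rw [mul_pow]; ring

lemma psum_summable (c : ℕ → ℝ) (C : ℝ) (hc : ∀ k, |c k| ≤ C / k.factorial) (t : ℝ) :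
    Summable (fun k => c k * t ^ k) := by
  have hC : 0 ≤ C := le_trans (abs_nonneg _) (by simpa using hc 0)
  apply Summable.of_norm_bounded
    ((Real.summable_pow_div_factorial |t|).mul_left C)
  intro k
  rw [norm_mul, norm_pow, Real.norm_eq_abs, Real.norm_eq_abs]
  calc |c k| * |t| ^ k ≤ (C / k.factorial) * |t| ^ k := by
        gcongr; exact hc k
    _ = C * (|t| ^ k / k.factorial) := by ring

lemma psum_hasDerivAt (c : ℕ → ℝ) (C : ℝ) (hc : ∀ k, |c k| ≤ C / k.factorial) (t : ℝ) :
    HasDerivAt (fun s => ∑' k : ℕ, c k * s ^ k)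
      (∑' k : ℕ, (((k : ℝ) + 1) * c (k + 1)) * t ^ k) t := by
  set R : ℝ := |t| + 1 with hR
  have hR1 : 1 ≤ R := by rw [hR]; nlinarith [abs_nonneg t]
  have hRt : t ∈ Ioo (-R) R := by
    constructor <;> [nlinarith [abs_nonneg t, neg_abs_le t]; nlinarith [le_abs_self t]]
  have hu : Summable (fun k : ℕ => C * ((2 * R) ^ k / k.factorial)) :=
    (Real.summable_pow_div_factorial (2 * R)).mul_left C
  have key : HasDerivAt (fun s => ∑' k : ℕ, c k * s ^ k)
      (∑' k : ℕ, c k * ((k : ℝ) * t ^ (k - 1))) t := by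
    apply hasDerivAt_tsum_of_isPreconnected hu isOpen_Ioo (convex_Ioo _ _).isPreconnected
      (fun k y _ => (hasDerivAt_pow k y).const_mul (c k))
      (fun k y hy => psum_bound_aux hc (abs_le.mpr ⟨hy.1.le, hy.2.le⟩) hR1 k)
      hRt (psum_summable c C hc t) hRt
  convert key using 1
  have hs : Summable (fun k : ℕ => c k * ((k : ℝ) * t ^ (k - 1))) :=
    Summable.of_norm_bounded hu (psum_bound_aux hc (by nlinarith [abs_nonneg t]) hR1)
  rw [hs.tsum_eq_zero_add]
  rw [show c 0 * (((0:ℕ):ℝ) * t ^ (0 - 1)) = 0 by push_cast; ring, zero_add]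
  apply tsum_congr
  intro k
  rw [Nat.add_sub_cancel]
  push_cast
  ring

noncomputable section
open Set Filter

/-- coefficients of the entire part of the Bessel function -/
def bcoef (ν : ℝ) (k : ℕ) : ℝ := (-1) ^ k / (k.factorial * Real.Gamma ((k : ℝ) + ν + 1))

def bcoef1 (ν : ℝ) (k : ℕ) : ℝ := ((k : ℝ) + 1) * bcoef ν (k + 1)

def bcoef2 (ν : ℝ) (k : ℕ) : ℝ := ((k : ℝ) + 1) * bcoef1 ν (k + 1)

def bf (ν : ℝ) (t : ℝ) : ℝ := ∑' k : ℕ, bcoef ν k * t ^ k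
def bf1 (ν : ℝ) (t : ℝ) : ℝ := ∑' k : ℕ, bcoef1 ν k * t ^ k
def bf2 (ν : ℝ) (t : ℝ) : ℝ := ∑' k : ℕ, bcoef2 ν k * t ^ k

variable {ν : ℝ} (hν : 0 ≤ ν)

lemma gamma_arg_pos (k : ℕ) (hν : 0 ≤ ν) : (0:ℝ) < (k : ℝ) + ν + 1 := by positivity

lemma gamma_pos (k : ℕ) (hν : 0 ≤ ν) : 0 < Real.Gamma ((k : ℝ) + ν + 1) :=
  Real.Gamma_pos_of_pos (gamma_arg_pos k hν)

lemma gamma_ge (hν : 0 ≤ ν) : ∀ k : ℕ,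
    (k.factorial : ℝ) * Real.Gamma (ν + 1) ≤ Real.Gamma ((k : ℝ) + ν + 1) := by
  intro k
  induction k with
  | zero => simp
  | succ n ih =>
    have h1 : ((n+1 : ℕ) : ℝ) + ν + 1 = ((n : ℝ) + ν + 1) + 1 := by push_cast; ring
    rw [h1, Real.Gamma_add_one (ne_of_gt (gamma_arg_pos n hν))]
    have h2 : ((n+1).factorial : ℝ) = ((n:ℝ)+1) * n.factorial := by
      rw [Nat.factorial_succ]; push_cast; ring
    rw [h2]
    have hg : 0 < Real.Gamma (ν + 1) := Real.Gamma_pos_of_pos (by linarith)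
    calc ((n:ℝ)+1) * (n.factorial : ℝ) * Real.Gamma (ν + 1)
        = ((n:ℝ)+1) * ((n.factorial : ℝ) * Real.Gamma (ν + 1)) := by ring
      _ ≤ ((n:ℝ)+ν+1) * Real.Gamma ((n : ℝ) + ν + 1) := by
          apply mul_le_mul (by linarith) ih (by positivity) (by positivity)

lemma bcoef_abs (hν : 0 ≤ ν) (k : ℕ) :
    |bcoef ν k| ≤ (Real.Gamma (ν+1))⁻¹ / ((k.factorial : ℝ) * k.factorial) := by
  have hg : 0 < Real.Gamma (ν + 1) := Real.Gamma_pos_of_pos (by linarith)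
  have hgk := gamma_pos k hν
  have hfk : (0:ℝ) < k.factorial := by exact_mod_cast k.factorial_pos
  rw [bcoef, abs_div, abs_pow, abs_neg, abs_one, one_pow,
    abs_of_pos (by positivity : (0:ℝ) < (k.factorial : ℝ) * Real.Gamma ((k : ℝ) + ν + 1))]
  rw [div_le_div_iff₀ (by positivity) (by positivity)]
  have key := gamma_ge hν k
  calc (1:ℝ) * ((k.factorial:ℝ) * k.factorial)
      = (Real.Gamma (ν+1))⁻¹ * ((k.factorial:ℝ) * ((k.factorial:ℝ) * Real.Gamma (ν+1))) := by
        field_simp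
    _ ≤ (Real.Gamma (ν+1))⁻¹ * ((k.factorial:ℝ) * Real.Gamma ((k:ℝ) + ν + 1)) := by
        have h2 : (0:ℝ) ≤ (Real.Gamma (ν+1))⁻¹ := by positivity
        have h3 : (0:ℝ) ≤ (k.factorial:ℝ) := le_of_lt hfk
        exact mul_le_mul_of_nonneg_left (mul_le_mul_of_nonneg_left key h3) h2

lemma shape_bound {c : ℕ → ℝ} {C : ℝ} (hC : 0 ≤ C)
    (h : ∀ k, |c k| ≤ C / ((k.factorial : ℝ) * k.factorial)) (k : ℕ) :
    |((k : ℝ) + 1) * c (k + 1)| ≤ C / ((k.factorial : ℝ) * k.factorial) := by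
  have hfk : (0:ℝ) < k.factorial := by exact_mod_cast k.factorial_pos
  have hfk1 : (0:ℝ) < (k+1).factorial := by exact_mod_cast (k+1).factorial_pos
  rw [abs_mul, abs_of_nonneg (by positivity : (0:ℝ) ≤ (k:ℝ) + 1)]
  calc ((k:ℝ)+1) * |c (k+1)|
      ≤ ((k:ℝ)+1) * (C / (((k+1).factorial : ℝ) * (k+1).factorial)) := by
        gcongr; exact h (k+1)
    _ ≤ C / ((k.factorial : ℝ) * k.factorial) := by
        have hfac : ((k+1).factorial : ℝ) = ((k:ℝ)+1) * k.factorial := by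
          rw [Nat.factorial_succ]; push_cast; ring
        rw [hfac]
        have hx : ((k:ℝ)+1) * (C / (((k:ℝ)+1) * ↑k.factorial * (((k:ℝ)+1) * ↑k.factorial)))
            = C / (((k:ℝ)+1) * (↑k.factorial * ↑k.factorial)) := by
          rw [eq_div_iff (by positivity)]
          field_simp
        rw [hx]
        apply div_le_div_of_nonneg_left hC (by positivity) ?_ |>.trans_eq rfl
        nlinarith [mul_pos hfk hfk]

lemma weak_bound {c : ℕ → ℝ} {C : ℝ}
    (h : ∀ k, |c k| ≤ C / ((k.factorial : ℝ) * k.factorial)) (k : ℕ) :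
    |c k| ≤ C / k.factorial := by
  have hfk : (0:ℝ) < k.factorial := by exact_mod_cast k.factorial_pos
  have h1 : (1:ℝ) ≤ k.factorial := by exact_mod_cast k.factorial_pos
  have hC : 0 ≤ C := by
    have := (abs_nonneg (c 0)).trans (h 0); simpa using this
  refine (h k).trans ?_
  rw [div_le_div_iff₀ (by positivity) (by positivity)]
  nlinarith [mul_nonneg (mul_nonneg hC (le_of_lt hfk)) (sub_nonneg.mpr h1)]

variable {ν : ℝ}

lemma bcoef1_abs (hν : 0 ≤ ν) (k : ℕ) :
    |bcoef1 ν k| ≤ (Real.Gamma (ν+1))⁻¹ / ((k.factorial : ℝ) * k.factorial) :=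
  shape_bound (by positivity) (bcoef_abs hν) k

lemma bcoef2_abs (hν : 0 ≤ ν) (k : ℕ) :
    |bcoef2 ν k| ≤ (Real.Gamma (ν+1))⁻¹ / ((k.factorial : ℝ) * k.factorial) :=
  shape_bound (by positivity) (fun k => bcoef1_abs hν k) k

lemma bf_summable (hν : 0 ≤ ν) (t : ℝ) : Summable (fun k => bcoef ν k * t ^ k) :=
  psum_summable _ _ (fun k => weak_bound (bcoef_abs hν) k) t

lemma bf1_summable (hν : 0 ≤ ν) (t : ℝ) : Summable (fun k => bcoef1 ν k * t ^ k) :=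
  psum_summable _ _ (fun k => weak_bound (bcoef1_abs hν) k) t

lemma bf2_summable (hν : 0 ≤ ν) (t : ℝ) : Summable (fun k => bcoef2 ν k * t ^ k) :=
  psum_summable _ _ (fun k => weak_bound (bcoef2_abs hν) k) t

lemma bf_hasDeriv (hν : 0 ≤ ν) (t : ℝ) : HasDerivAt (bf ν) (bf1 ν t) t :=
  psum_hasDerivAt _ _ (fun k => weak_bound (bcoef_abs hν) k) t

lemma bf1_hasDeriv (hν : 0 ≤ ν) (t : ℝ) : HasDerivAt (bf1 ν) (bf2 ν t) t :=
  psum_hasDerivAt _ _ (fun k => weak_bound (bcoef1_abs hν) k) t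

lemma bcoef_rec (hν : 0 ≤ ν) (k : ℕ) :
    ((k : ℝ) + 1) * ((k : ℝ) + ν + 1) * bcoef ν (k + 1) = - bcoef ν k := by
  have hgk := gamma_pos k hν
  have harg := gamma_arg_pos k hν
  have hfk : (0:ℝ) < k.factorial := by exact_mod_cast k.factorial_pos
  rw [bcoef, bcoef]
  have h1 : ((k+1 : ℕ) : ℝ) + ν + 1 = ((k : ℝ) + ν + 1) + 1 := by push_cast; ring
  rw [h1, Real.Gamma_add_one (ne_of_gt harg)]
  have h2 : ((k+1).factorial : ℝ) = ((k:ℝ)+1) * k.factorial := by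
    rw [Nat.factorial_succ]; push_cast; ring
  rw [h2, pow_succ]
  field_simp

lemma bf_ode (hν : 0 ≤ ν) (t : ℝ) :
    t * bf2 ν t + (ν + 1) * bf1 ν t + bf ν t = 0 := by
  have h2 : t * bf2 ν t = ∑' k : ℕ, bcoef2 ν k * t ^ (k+1) := by
    rw [bf2, ← tsum_mul_left]
    exact tsum_congr fun k => by ring
  have hsum : Summable (fun k : ℕ => ((ν+1) * bcoef1 ν k + bcoef ν k) * t ^ k) := by
    apply Summable.congr (((bf1_summable hν t).mul_left (ν+1)).add (bf_summable hν t))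
    intro k; ring
  have h3 : (ν + 1) * bf1 ν t + bf ν t
      = ∑' k : ℕ, ((ν+1) * bcoef1 ν k + bcoef ν k) * t ^ k := by
    rw [bf1, bf, ← tsum_mul_left,
      ← Summable.tsum_add ((bf1_summable hν t).mul_left (ν+1)) (bf_summable hν t)]
    exact tsum_congr fun k => by ring
  have hterm : ∀ k : ℕ, ((ν+1) * bcoef1 ν (k+1) + bcoef ν (k+1)) * t ^ (k+1)
      = - (bcoef2 ν k * t ^ (k+1)) := by
    intro k
    have hr := bcoef_rec hν (k+1)
    have hc : ((k+1:ℕ):ℝ) = (k:ℝ)+1 := by push_cast; ring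
    rw [hc] at hr
    simp only [bcoef2, bcoef1] at hr ⊢
    push_cast at hr ⊢
    linear_combination t ^ (k+1) * hr
  have h0 : ((ν+1) * bcoef1 ν 0 + bcoef ν 0) * t ^ 0 = 0 := by
    have hr := bcoef_rec hν 0
    simp only [Nat.cast_zero] at hr
    simp only [bcoef1] at hr ⊢
    push_cast at hr ⊢
    linear_combination hr
  rw [add_assoc, h2, h3, hsum.tsum_eq_zero_add, h0, zero_add]
  rw [tsum_congr hterm, tsum_neg]
  ring

variable {ν : ℝ}

def Jf (ν : ℝ) (x : ℝ) : ℝ := (x/2) ^ ν * bf ν ((x/2)^2)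

def J1f (ν : ℝ) (x : ℝ) : ℝ :=
  (x/2) ^ ν * (ν/x * bf ν ((x/2)^2) + (x/2) * bf1 ν ((x/2)^2))

def J2f (ν : ℝ) (x : ℝ) : ℝ :=
  ν/x * ((x/2) ^ ν * (ν/x * bf ν ((x/2)^2) + (x/2) * bf1 ν ((x/2)^2)))
  + (x/2) ^ ν * ((-(ν/x^2)) * bf ν ((x/2)^2)
      + (ν/x * (x/2) + 1/2) * bf1 ν ((x/2)^2) + (x/2) * ((x/2) * bf2 ν ((x/2)^2)))

lemma besselJ_eq (hν : 0 ≤ ν) {x : ℝ} (hx : 0 < x) : besselJ ν x = Jf ν x := by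
  have hx2 : (0:ℝ) < x/2 := by positivity
  rw [besselJ, Jf, bf, mul_comm, ← tsum_mul_right]
  apply tsum_congr
  intro k
  rw [bcoef]
  have h1 : (x/2) ^ (2 * (k:ℝ) + ν) = ((x/2)^2) ^ k * (x/2) ^ ν := by
    rw [Real.rpow_add hx2]
    congr 1
    rw [show (2 * (k:ℝ)) = ((2*k : ℕ) : ℝ) by push_cast; ring, Real.rpow_natCast, pow_mul]
  rw [h1]
  ring

lemma half_hasDeriv (x : ℝ) : HasDerivAt (fun y : ℝ => y/2) (1/2 : ℝ) x := by
  simpa using (hasDerivAt_id x).div_const 2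

lemma inner_hasDeriv (x : ℝ) : HasDerivAt (fun y : ℝ => (y/2)^2) (x/2) x := by
  have h := (half_hasDeriv x).pow 2
  refine h.congr_deriv ?_
  norm_num
  ring

lemma A_hasDeriv (hν : 0 ≤ ν) (x : ℝ) :
    HasDerivAt (fun y => bf ν ((y/2)^2)) ((x/2) * bf1 ν ((x/2)^2)) x := by
  have := (bf_hasDeriv hν ((x/2)^2)).comp x (inner_hasDeriv x)
  exact this.congr_deriv (mul_comm _ _)

lemma B_hasDeriv (hν : 0 ≤ ν) (x : ℝ) :
    HasDerivAt (fun y => bf1 ν ((y/2)^2)) ((x/2) * bf2 ν ((x/2)^2)) x := by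
  have := (bf1_hasDeriv hν ((x/2)^2)).comp x (inner_hasDeriv x)
  exact this.congr_deriv (mul_comm _ _)

lemma r_hasDeriv {x : ℝ} (hx : 0 < x) :
    HasDerivAt (fun y : ℝ => (y/2) ^ ν) (ν/x * (x/2) ^ ν) x := by
  have hx2 : (0:ℝ) < x/2 := by positivity
  have h := (Real.hasDerivAt_rpow_const (x := x/2) (p := ν) (Or.inl hx2.ne')).comp x
    ((hasDerivAt_id x).div_const 2)
  refine h.congr_deriv ?_
  rw [show ν - 1 = ν + (-1) from by ring, Real.rpow_add hx2, Real.rpow_neg_one]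
  field_simp

lemma Jf_hasDeriv (hν : 0 ≤ ν) {x : ℝ} (hx : 0 < x) :
    HasDerivAt (Jf ν) (J1f ν x) x := by
  have h := (r_hasDeriv (ν := ν) hx).mul (A_hasDeriv hν x)
  refine h.congr_deriv ?_
  rw [J1f]
  ring

lemma nuinv_hasDeriv {x : ℝ} (hx : 0 < x) :
    HasDerivAt (fun y : ℝ => ν/y) (-(ν/x^2)) x := by
  have h := (hasDerivAt_inv hx.ne').const_mul ν
  have he : (fun y : ℝ => ν/y) = fun y => ν * y⁻¹ := by
    funext y; rw [div_eq_mul_inv]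
  rw [he]
  refine h.congr_deriv ?_
  field_simp

lemma J1f_hasDeriv (hν : 0 ≤ ν) {x : ℝ} (hx : 0 < x) :
    HasDerivAt (J1f ν) (J2f ν x) x := by
  have hQ : HasDerivAt (fun y => ν/y * bf ν ((y/2)^2) + (y/2) * bf1 ν ((y/2)^2))
      ((-(ν/x^2)) * bf ν ((x/2)^2) + ν/x * ((x/2) * bf1 ν ((x/2)^2))
        + ((1/2) * bf1 ν ((x/2)^2) + (x/2) * ((x/2) * bf2 ν ((x/2)^2)))) x :=
    ((nuinv_hasDeriv hx).mul (A_hasDeriv hν x)).add ((half_hasDeriv x).mul (B_hasDeriv hν x))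
  have h := (r_hasDeriv (ν := ν) hx).mul hQ
  refine h.congr_deriv ?_
  rw [J2f]
  ring

lemma bessel_ode (hν : 0 ≤ ν) {x : ℝ} (hx : 0 < x) :
    x^2 * J2f ν x + x * J1f ν x + (x^2 - ν^2) * Jf ν x = 0 := by
  have hode := bf_ode hν ((x/2)^2)
  rw [J2f, J1f, Jf]
  have hx' : x ≠ 0 := hx.ne'
  set A := bf ν ((x/2)^2) with hA
  set B := bf1 ν ((x/2)^2) with hB
  set C := bf2 ν ((x/2)^2) with hC
  set r := (x/2:ℝ) ^ ν with hr
  field_simp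
  linear_combination (4 * r * x^2) * hode

def wf (ν : ℝ) (x : ℝ) : ℝ :=
  x^2 * (J1f ν x)^2 + x * Jf ν x * J1f ν x + (x^2 - ν^2) * (Jf ν x)^2

lemma wf_eq (hν : 0 ≤ ν) {x : ℝ} (hx : 0 < x) :
    x^2 * ((J1f ν x)^2 - J2f ν x * Jf ν x) = wf ν x := by
  have h := bessel_ode hν hx
  rw [wf]
  linear_combination (- Jf ν x) * h

lemma wf_hasDeriv (hν : 0 ≤ ν) {x : ℝ} (hx : 0 < x) :
    HasDerivAt (wf ν) (x * (J1f ν x)^2 + (x + ν^2/x) * (Jf ν x)^2) x := by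
  have hJ := Jf_hasDeriv hν hx
  have hJ1 := J1f_hasDeriv hν hx
  have hid : HasDerivAt (fun y : ℝ => y) 1 x := hasDerivAt_id x
  have hsq : HasDerivAt (fun y : ℝ => y^2) (2*x) x := by
    simpa using (hasDerivAt_pow 2 x)
  have h : HasDerivAt (wf ν)
      ((2*x) * (J1f ν x)^2 + x^2 * (2 * J1f ν x * J2f ν x)
        + ((1 * Jf ν x + x * J1f ν x) * J1f ν x + (x * Jf ν x) * J2f ν x)
        + ((2*x) * (Jf ν x)^2 + (x^2 - ν^2) * (2 * Jf ν x * J1f ν x))) x := by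
    have t1 : HasDerivAt (fun y => y^2 * (J1f ν y)^2)
        ((2*x) * (J1f ν x)^2 + x^2 * (2 * J1f ν x * J2f ν x)) x := by
      have := hsq.mul (hJ1.pow 2)
      refine this.congr_deriv ?_
      push_cast [Pi.pow_apply]
      ring
    have t2 : HasDerivAt (fun y => y * Jf ν y * J1f ν y)
        ((1 * Jf ν x + x * J1f ν x) * J1f ν x + (x * Jf ν x) * J2f ν x) x :=
      ((hid.mul hJ).mul hJ1)
    have t3 : HasDerivAt (fun y => (y^2 - ν^2) * (Jf ν y)^2)
        ((2*x) * (Jf ν x)^2 + (x^2 - ν^2) * (2 * Jf ν x * J1f ν x)) x := by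
      have := (hsq.sub_const (ν^2)).mul (hJ.pow 2)
      refine this.congr_deriv ?_
      push_cast [Pi.pow_apply]
      ring
    exact (t1.add t2).add t3
  convert h using 1
  have hode := bessel_ode hν hx
  have hx' : x ≠ 0 := hx.ne'
  set J := Jf ν x
  set K := J1f ν x
  set L := J2f ν x
  field_simp
  linear_combination (-J - 2*x*K) * hode

def Ef (ν : ℝ) (t : ℝ) : ℝ :=
  t ^ ν * ((ν * bf ν t + 2*t*bf1 ν t)^2 + bf ν t * (ν * bf ν t + 2*t*bf1 ν t)
    + (4*t - ν^2) * (bf ν t)^2)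

lemma rsq_pow {x : ℝ} (hx : 0 < x) : ((x/2)^2 : ℝ) ^ ν = (((x/2) ^ ν)^2 : ℝ) := by
  have h2 : (0:ℝ) ≤ x/2 := by positivity
  rw [← Real.rpow_natCast (x/2) 2, ← Real.rpow_natCast ((x/2) ^ ν) 2,
    ← Real.rpow_mul h2, ← Real.rpow_mul h2]
  push_cast
  rw [mul_comm]

lemma wf_eq_Ef (hν : 0 ≤ ν) {x : ℝ} (hx : 0 < x) : wf ν x = Ef ν ((x/2)^2) := by
  have hx' : x ≠ 0 := hx.ne'
  rw [wf, Ef, Jf, J1f, rsq_pow hx]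
  set A := bf ν ((x/2)^2) with hA
  set B := bf1 ν ((x/2)^2) with hB
  set r := (x/2:ℝ) ^ ν with hr
  field_simp
  ring

lemma bf_cont (hν : 0 ≤ ν) : Continuous (bf ν) :=
  continuous_iff_continuousAt.mpr fun t => (bf_hasDeriv hν t).continuousAt

lemma bf1_cont (hν : 0 ≤ ν) : Continuous (bf1 ν) :=
  continuous_iff_continuousAt.mpr fun t => (bf1_hasDeriv hν t).continuousAt

lemma tendsto_wf (hν : 0 ≤ ν) : Filter.Tendsto (wf ν) (nhdsWithin 0 (Set.Ioi 0)) (nhds 0) := by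
  have hbr : Filter.Tendsto
      (fun t => (ν * bf ν t + 2*t*bf1 ν t)^2 + bf ν t * (ν * bf ν t + 2*t*bf1 ν t)
        + (4*t - ν^2) * (bf ν t)^2) (nhdsWithin 0 (Set.Ioi 0)) (nhds (ν * (bf ν 0)^2)) := by
    have hc : Continuous (fun t => (ν * bf ν t + 2*t*bf1 ν t)^2
        + bf ν t * (ν * bf ν t + 2*t*bf1 ν t) + (4*t - ν^2) * (bf ν t)^2) := by
      have hcb := bf_cont hν
      have hcb1 := bf1_cont hν
      fun_prop
    have := (hc.tendsto 0).mono_left (nhdsWithin_le_nhds (s := Set.Ioi (0:ℝ)))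
    convert this using 2
    ring
  have hrp : Filter.Tendsto (fun t : ℝ => t ^ ν) (nhdsWithin 0 (Set.Ioi 0)) (nhds ((0:ℝ) ^ ν)) :=
    ((Real.continuousAt_rpow_const 0 ν (Or.inr hν)).tendsto).mono_left nhdsWithin_le_nhds
  have hEf : Filter.Tendsto (Ef ν) (nhdsWithin 0 (Set.Ioi 0))
      (nhds ((0:ℝ) ^ ν * (ν * (bf ν 0)^2))) := hrp.mul hbr
  have hzero : (0:ℝ) ^ ν * (ν * (bf ν 0)^2) = 0 := by
    rcases eq_or_lt_of_le hν with h | h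
    · rw [← h]; ring
    · rw [Real.zero_rpow h.ne']; ring
  rw [hzero] at hEf
  have hcomp : Filter.Tendsto (fun x : ℝ => (x/2)^2) (nhdsWithin 0 (Set.Ioi 0))
      (nhdsWithin 0 (Set.Ioi 0)) := by
    apply Filter.Tendsto.inf
    · have hc : Continuous (fun x : ℝ => (x/2)^2) := by continuity
      simpa using hc.tendsto 0
    · exact Filter.tendsto_principal_principal.mpr fun y hy => by
        have hy' : (0:ℝ) < y := hy
        exact Set.mem_Ioi.mpr (by positivity)
  have := hEf.comp hcomp
  apply this.congr'
  filter_upwards [self_mem_nhdsWithin] with y hy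
  exact (wf_eq_Ef hν hy).symm

lemma wf_nonneg (hν : 0 ≤ ν) {x : ℝ} (hx : 0 < x) : 0 ≤ wf ν x := by
  have hmono : ∀ ε, ε ∈ Set.Ioc (0:ℝ) x → wf ν ε ≤ wf ν x := by
    intro ε hε
    have hsub : Set.Icc ε x ⊆ Set.Ioi 0 := fun y hy => lt_of_lt_of_le hε.1 hy.1
    have h := monotoneOn_of_deriv_nonneg (convex_Icc ε x)
      (fun y hy => ((wf_hasDeriv hν (hsub hy)).continuousAt).continuousWithinAt)
      (fun y hy => by
        have hy' : y ∈ Set.Ioi (0:ℝ) :=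
          hsub (interior_subset (s := Set.Icc ε x) hy)
        exact (wf_hasDeriv hν hy').differentiableAt.differentiableWithinAt)
      (fun y hy => by
        have hy' : (0:ℝ) < y := hsub (interior_subset (s := Set.Icc ε x) hy)
        rw [(wf_hasDeriv hν hy').deriv]
        have h1 : 0 ≤ y + ν^2/y := by positivity
        positivity)
    exact h (Set.mem_Icc.mpr ⟨le_refl ε, hε.2⟩) (Set.mem_Icc.mpr ⟨hε.2, le_refl x⟩) hε.2
  apply le_of_tendsto (tendsto_wf hν)
  filter_upwards [Ioc_mem_nhdsGT hx] with ε hε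
  exact hmono ε hε

theorem stmt_6 (ν : ℝ) (hν : 0 ≤ ν) : ∀ x > (0 : ℝ), 0 ≤ v (besselJ ν) x := by
  intro x hx
  have hJd : ∀ y : ℝ, 0 < y → deriv (besselJ ν) y = J1f ν y := by
    intro y hy
    have hEq : besselJ ν =ᶠ[nhds y] Jf ν := by
      filter_upwards [Ioi_mem_nhds hy] with z hz
      exact besselJ_eq hν hz
    rw [hEq.deriv_eq, (Jf_hasDeriv hν hy).deriv]
  have hD2 : deriv^[2] (besselJ ν) x = J2f ν x := by
    have h2 : deriv^[2] (besselJ ν) x = deriv (deriv (besselJ ν)) x := by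
      rw [Function.iterate_succ, Function.iterate_one]; rfl
    rw [h2]
    have hEq2 : deriv (besselJ ν) =ᶠ[nhds x] J1f ν := by
      filter_upwards [Ioi_mem_nhds hx] with z hz
      exact hJd z hz
    rw [hEq2.deriv_eq, (J1f_hasDeriv hν hx).deriv]
  have hv : v (besselJ ν) x = (J1f ν x)^2 - J2f ν x * Jf ν x := by
    rw [v, hJd x hx, hD2, besselJ_eq hν hx]
  have hw := wf_nonneg hν hx
  rw [← wf_eq hν hx] at hw
  rw [hv]
  nlinarith [pow_pos hx 2]
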